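/- Let M, N : [a,b] × ℝⁿ → vec be free persistence modules (direct sums of interval modules on free intervals [x₀,b] × [x₁,∞) × ⋯ × [xₙ,∞)) that are vertically ε-interleaved. For δ ∈ [a,b], let M^δ (resp. N^δ) be the direct summand of M (resp. N) consisting of all interval summands whose free interval has first coordinate exactly δ. Then M^δ and N^δ are vertically ε-interleaved. -/

import Mathlib

open CategoryTheory CategoryTheory.Limits
open scoped ENNReal

/-- The poset `[a,b] × ℝⁿ` (product order), viewed as a thin category. -/
def Slab (a b : ℝ) (n : ℕ) : Type := Set.Icc a b × (Fin n → ℝ)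

instance (a b : ℝ) (n : ℕ) : Preorder (Slab a b n) :=
  inferInstanceAs (Preorder (Set.Icc a b × (Fin n → ℝ)))

variable {a b : ℝ} {n : ℕ}

/-- The vertical shift by `ε·1₀`, `1₀ = (0,1,…,1)`: `(s, x) ↦ (s, x + ε·1)`. -/
def vshift (ε : ℝ) (p : Slab a b n) : Slab a b n := (p.1, fun i => p.2 i + ε)

lemma vshift_monotone (ε : ℝ) : Monotone (vshift (a := a) (b := b) (n := n) ε) :=
  fun _ _ h => Prod.le_def.mpr ⟨(Prod.le_def.mp h).1,
    fun i => (add_le_add_iff_right ε).mpr ((Prod.le_def.mp h).2 i)⟩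

/-- The vertical `ε·1₀`-shift functor on `[a,b] × ℝⁿ`. -/
def vshiftFunctor (a b : ℝ) (n : ℕ) (ε : ℝ) : Slab a b n ⥤ Slab a b n :=
  Monotone.functor (vshift_monotone ε)

variable (K : Type) [Field K]

/-- Persistence modules over `[a,b] × ℝⁿ`. -/
abbrev SlabMod (a b : ℝ) (n : ℕ) (K : Type) [Field K] := Slab a b n ⥤ ModuleCat K

/-- Vertical `ε`-interleaving (i.e. `ε·1₀`-interleaving, `1₀ = (0,1,…,1)`) between two
persistence modules over `[a,b] × ℝⁿ`. -/
def VertInterleaved (ε : ℝ) (M N : SlabMod a b n K) : Prop :=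
  ∃ (f : M ⟶ vshiftFunctor a b n ε ⋙ N) (g : N ⟶ vshiftFunctor a b n ε ⋙ M),
    (∀ (p : Slab a b n) (h : p ≤ vshift ε (vshift ε p)),
        f.app p ≫ g.app (vshift ε p) = M.map (homOfLE h)) ∧
    (∀ (p : Slab a b n) (h : p ≤ vshift ε (vshift ε p)),
        g.app p ≫ f.app (vshift ε p) = N.map (homOfLE h))

/-- The vertical interleaving distance `d_I^{1₀}`. -/
noncomputable def vertInterleavingDist (M N : SlabMod a b n K) : ℝ≥0∞ :=
  sInf {e : ℝ≥0∞ | ∃ ε : ℝ, 0 ≤ ε ∧ e = ENNReal.ofReal ε ∧ VertInterleaved K ε M N}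

/-- The free interval (principal upset) generated by `c`, at the level of types:
`p ↦ PLift (c ≤ p)`. -/
def upFunctor (c : Slab a b n) : Slab a b n ⥤ Type where
  obj p := PLift (c ≤ p)
  map h := TypeCat.ofHom fun t => ⟨t.down.trans (leOfHom h)⟩
  map_id _ := rfl
  map_comp _ _ := rfl

/-- The interval module `k^J` on the free interval `J = [c, ∞)` (within `[a,b] × ℝⁿ`,
a free interval `[x₀,b] × [x₁,∞) × ⋯ × [xₙ,∞)` is exactly the principal upset of a point). -/
noncomputable def upMod (c : Slab a b n) : SlabMod a b n K :=
  upFunctor c ⋙ ModuleCat.free K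

/-- The free persistence module with one generator at `gen i` for each `i`. -/
noncomputable def freeMod {ι : Type} (gen : ι → Slab a b n) : SlabMod a b n K :=
  (show Slab a b n ⥤ Type from
    { obj := fun p => Σ i : ι, PLift (gen i ≤ p)
      map := fun h => TypeCat.ofHom fun t => ⟨t.1, ⟨t.2.down.trans (leOfHom h)⟩⟩
      map_id := fun _ => rfl
      map_comp := fun _ _ => rfl }) ⋙ ModuleCat.free K

/-- The zero persistence module. -/
noncomputable def zeroMod : SlabMod a b n K :=
  (CategoryTheory.Functor.const (Slab a b n)).obj (ModuleCat.of K PUnit)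

/-- A vertical `ε·1₀`-bottleneck matching between two multisets of free intervals, given by
families of generators `cB : ι → [a,b]×ℝⁿ` and `cC : κ → [a,b]×ℝⁿ`: a bijection between
subsets matching intervals whose interval modules are vertically `ε`-interleaved, all
unmatched intervals having interval modules vertically `ε`-interleaved with `0`. -/
def BottleneckMatch (ε : ℝ) {ι κ : Type} (cB : ι → Slab a b n) (cC : κ → Slab a b n) : Prop :=
  ∃ (s : Set ι) (t : Set κ) (e : s ≃ t),
    (∀ i : s, VertInterleaved K ε (upMod K (cB i)) (upMod K (cC (e i)))) ∧
    (∀ i : ι, i ∉ s → VertInterleaved K ε (upMod K (cB i)) (zeroMod K)) ∧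
    (∀ j : κ, j ∉ t → VertInterleaved K ε (upMod K (cC j)) (zeroMod K))

/-- The vertical bottleneck distance `d_B^{1₀}` between two barcodes of free intervals. -/
noncomputable def vertBottleneckDist {ι κ : Type} (cB : ι → Slab a b n)
    (cC : κ → Slab a b n) : ℝ≥0∞ :=
  sInf {e : ℝ≥0∞ | ∃ ε : ℝ, 0 ≤ ε ∧ e = ENNReal.ofReal ε ∧ BottleneckMatch K ε cB cC}

/-! ### Auxiliary material for `summand_interleaved` -/

namespace SummandAux

variable {a b : ℝ} {n : ℕ} {K : Type} [Field K]

/-- The index type of basis elements of `freeMod K c` at the point `p`. -/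
abbrev Idx {ι : Type} (c : ι → Slab a b n) (p : Slab a b n) : Type :=
  Σ i : ι, PLift (c i ≤ p)

lemma idx_eq {ι : Type} {c : ι → Slab a b n} {p : Slab a b n} {t s : Idx c p}
    (h : t.1 = s.1) : t = s := by
  rcases t with ⟨i, ⟨hi⟩⟩; rcases s with ⟨j, ⟨hj⟩⟩
  cases h; rfl

/-- Reinterpret an element of `freeMod K c` at `p` as a finitely supported function. -/
def asFinsupp {ι : Type} {c : ι → Slab a b n} {p : Slab a b n}
    (x : (freeMod K c).obj p) : Idx c p →₀ K := x

lemma hom_congr {X Y : ModuleCat K} {f g : X ⟶ Y} (h : f = g) (x : X) : f x = g x := by rw [h]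

lemma apply_eq_sum {α : Type} {X : ModuleCat K} (L : (α →₀ K) →ₗ[K] X) (v : α →₀ K) :
    L v = v.sum fun s k => L (Finsupp.single s k) := by
  conv_lhs => rw [← Finsupp.sum_single v]
  exact map_finsuppSum L v Finsupp.single

lemma freeMod_map_single {ι : Type} (c : ι → Slab a b n) {p q : Slab a b n} (h : p ⟶ q)
    (t : Idx c p) (k : K) :
    (freeMod K c).map h (Finsupp.single t k)
      = Finsupp.single (⟨t.1, ⟨t.2.down.trans (leOfHom h)⟩⟩ : Idx c q) k :=
  Finsupp.mapDomain_single

/-- The inclusion of the sub-free-module generated by those generators satisfying `P`. -/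
noncomputable def incl {ι : Type} (c : ι → Slab a b n) (P : ι → Prop) :
    freeMod K (fun i : {i // P i} => c i.1) ⟶ freeMod K c where
  app p := ModuleCat.ofHom (Finsupp.lmapDomain K K (fun t : Idx (fun i : {i // P i} => c i.1) p =>
    (⟨t.1.1, t.2⟩ : Idx c p)))
  naturality p q h := by
    refine ModuleCat.hom_ext (Finsupp.lhom_ext fun t k => ?_)
    have ht : ∀ t' : Idx (fun i : {i // P i} => c i.1) p,
        (Finsupp.lmapDomain K K (fun u : Idx (fun i : {i // P i} => c i.1) q =>
            (⟨u.1.1, u.2⟩ : Idx c q)))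
          ((freeMod K (fun i : {i // P i} => c i.1)).map h (Finsupp.single t' k))
        = (freeMod K c).map h
            ((Finsupp.lmapDomain K K (fun u : Idx (fun i : {i // P i} => c i.1) p =>
              (⟨u.1.1, u.2⟩ : Idx c p))) (Finsupp.single t' k)) := by
      intro t'
      rw [freeMod_map_single, Finsupp.lmapDomain_apply, Finsupp.mapDomain_single,
        Finsupp.lmapDomain_apply, Finsupp.mapDomain_single, freeMod_map_single]
      all_goals exact congrArg (fun u => Finsupp.single u k) (idx_eq rfl)
    exact ht t

lemma incl_single {ι : Type} (c : ι → Slab a b n) (P : ι → Prop) (p : Slab a b n)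
    (t : Idx (fun i : {i // P i} => c i.1) p) (k : K) :
    (incl (K := K) c P).app p (Finsupp.single t k)
      = Finsupp.single (⟨t.1.1, t.2⟩ : Idx c p) k := by
  show (Finsupp.lmapDomain K K _) (Finsupp.single t k) = _
  rw [Finsupp.lmapDomain_apply, Finsupp.mapDomain_single]

/-- The projection onto the sub-free-module generated by those generators satisfying `P`. -/
noncomputable def proj {ι : Type} (c : ι → Slab a b n) (P : ι → Prop) [DecidablePred P] :
    freeMod K c ⟶ freeMod K (fun i : {i // P i} => c i.1) where
  app p := ModuleCat.ofHom (Finsupp.lsum K fun t : Idx c p =>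
    if H : P t.1 then Finsupp.lsingle (⟨⟨t.1, H⟩, t.2⟩ : Idx (fun i : {i // P i} => c i.1) p)
    else 0)
  naturality p q h := by
    refine ModuleCat.hom_ext (Finsupp.lhom_ext fun t k => ?_)
    have ht : ∀ t' : Idx c p,
        ((Finsupp.lsum K fun u : Idx c q =>
          if H : P u.1 then
            Finsupp.lsingle (⟨⟨u.1, H⟩, u.2⟩ : Idx (fun i : {i // P i} => c i.1) q)
          else 0 : (Idx c q →₀ K) →ₗ[K] (Idx (fun i : {i // P i} => c i.1) q →₀ K)))
          ((freeMod K c).map h (Finsupp.single t' k))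
        = (freeMod K (fun i : {i // P i} => c i.1)).map h
            (((Finsupp.lsum K fun u : Idx c p =>
              if H : P u.1 then
                Finsupp.lsingle (⟨⟨u.1, H⟩, u.2⟩ : Idx (fun i : {i // P i} => c i.1) p)
              else 0 : (Idx c p →₀ K) →ₗ[K] (Idx (fun i : {i // P i} => c i.1) p →₀ K)))
              (Finsupp.single t' k)) := ?_
    · exact ht t
    intro t'
    rw [freeMod_map_single, Finsupp.lsum_single, Finsupp.lsum_single]
    by_cases H : P t'.1
    · rw [dif_pos H, dif_pos H]
      show Finsupp.single _ k = (freeMod K (fun i : {i // P i} => c i.1)).map h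
        (Finsupp.single (⟨⟨t'.1, H⟩, t'.2⟩ : Idx (fun i : {i // P i} => c i.1) p) k)
      rw [freeMod_map_single]
      all_goals exact congrArg (fun u => Finsupp.single u k) (idx_eq rfl)
    · rw [dif_neg H, dif_neg H]
      exact (map_zero (ConcreteCategory.hom ((freeMod K (fun i : {i // P i} => c i.1)).map h))).symm

lemma proj_single {ι : Type} (c : ι → Slab a b n) (P : ι → Prop) [DecidablePred P]
    (p : Slab a b n) (t : Idx c p) (k : K) :
    (proj (K := K) c P).app p (Finsupp.single t k)
      = if H : P t.1 then
          Finsupp.single (⟨⟨t.1, H⟩, t.2⟩ : Idx (fun i : {i // P i} => c i.1) p) k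
        else 0 := by
  show (Finsupp.lsum K _ : (Idx c p →₀ K) →ₗ[K] (Idx (fun i : {i // P i} => c i.1) p →₀ K))
    (Finsupp.single t k) = _
  rw [Finsupp.lsum_single]
  by_cases H : P t.1
  · rw [dif_pos H, dif_pos H]; rfl
  · rw [dif_neg H, dif_neg H]; rfl

/-- Support restriction: a natural transformation `freeMod cB ⟶ shift ⋙ freeMod cC` sends a
basis element generated at `cB t.1` to a combination of basis elements whose generators lie
below `vshift ε (cB t.1)`. -/
lemma support_le {ιB ιC : Type} (cB : ιB → Slab a b n) (cC : ιC → Slab a b n) (ε : ℝ)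
    (φ : freeMod K cB ⟶ vshiftFunctor a b n ε ⋙ freeMod K cC)
    (p : Slab a b n) (t : Idx cB p) (k : K) (s : Idx cC (vshift ε p))
    (hs : asFinsupp (K := K) (c := cC) (p := vshift ε p) (φ.app p (Finsupp.single t k)) s ≠ 0) :
    cC s.1 ≤ vshift ε (cB t.1) := by
  have hqp : cB t.1 ≤ p := t.2.down
  have h1 : (Finsupp.single t k : Idx cB p →₀ K)
      = (freeMod K cB).map (homOfLE hqp)
          (Finsupp.single (⟨t.1, ⟨le_refl _⟩⟩ : Idx cB (cB t.1)) k) := by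
    rw [freeMod_map_single]
    all_goals exact congrArg (fun u => Finsupp.single u k) (idx_eq rfl)
  have h2 : φ.app p ((freeMod K cB).map (homOfLE hqp)
        (Finsupp.single (⟨t.1, ⟨le_refl _⟩⟩ : Idx cB (cB t.1)) k))
      = (vshiftFunctor a b n ε ⋙ freeMod K cC).map (homOfLE hqp)
          (φ.app (cB t.1) (Finsupp.single (⟨t.1, ⟨le_refl _⟩⟩ : Idx cB (cB t.1)) k)) :=
    hom_congr (φ.naturality (homOfLE hqp)) _
  rw [h1, h2] at hs
  by_contra hcon
  apply hs
  show Finsupp.mapDomain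
      (fun u : Idx cC (vshift ε (cB t.1)) =>
        (⟨u.1, ⟨u.2.down.trans (vshift_monotone ε hqp)⟩⟩ : Idx cC (vshift ε p)))
      (φ.app (cB t.1) (Finsupp.single (⟨t.1, ⟨le_refl _⟩⟩ : Idx cB (cB t.1)) k)) s = 0
  refine Finsupp.mapDomain_notin_range _ s ?_
  rintro ⟨u, rfl⟩
  exact hcon u.2.down

section Key

variable {ιB ιC : Type} (cB : ιB → Slab a b n) (cC : ιC → Slab a b n) (ε : ℝ) (δ : Set.Icc a b)

open Classical in
/-- One half of the interleaving condition restricts to the `δ`-summands. -/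
lemma key
    (f : freeMod K cB ⟶ vshiftFunctor a b n ε ⋙ freeMod K cC)
    (g : freeMod K cC ⟶ vshiftFunctor a b n ε ⋙ freeMod K cB)
    (hfg : ∀ (p : Slab a b n) (h : p ≤ vshift ε (vshift ε p)),
      f.app p ≫ g.app (vshift ε p) = (freeMod K cB).map (homOfLE h))
    (p : Slab a b n) (h : p ≤ vshift ε (vshift ε p)) :
    ((incl cB (fun i => (cB i).1 = δ) ≫ f ≫
        Functor.whiskerLeft (vshiftFunctor a b n ε) (proj cC (fun j => (cC j).1 = δ))).app p) ≫
    ((incl cC (fun j => (cC j).1 = δ) ≫ g ≫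
        Functor.whiskerLeft (vshiftFunctor a b n ε) (proj cB (fun i => (cB i).1 = δ))).app (vshift ε p))
      = (freeMod K (fun i : {i // (cB i).1 = δ} => cB i.1)).map (homOfLE h) := by
  set PB : ιB → Prop := fun i => (cB i).1 = δ with hPB
  set PC : ιC → Prop := fun j => (cC j).1 = δ with hPC
  refine ModuleCat.hom_ext (Finsupp.lhom_ext fun t k => ?_)
  show (proj cB PB).app (vshift ε (vshift ε p))
      (g.app (vshift ε p) ((incl cC PC).app (vshift ε p)
        ((proj cC PC).app (vshift ε p)
          (f.app p ((incl cB PB).app p (Finsupp.single t k))))))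
    = (freeMod K (fun i : {i // PB i} => cB i.1)).map (homOfLE h) (Finsupp.single t k)
  rw [incl_single]
  have step1 :
      ((proj cB PB).app (vshift ε (vshift ε p))
        (g.app (vshift ε p) ((incl cC PC).app (vshift ε p)
          ((proj cC PC).app (vshift ε p)
            (f.app p (Finsupp.single (⟨t.1.1, t.2⟩ : Idx cB p) k))))))
    = ((proj cB PB).app (vshift ε (vshift ε p))
        (g.app (vshift ε p)
          (f.app p (Finsupp.single (⟨t.1.1, t.2⟩ : Idx cB p) k)))) := by
    let F2 : (Idx cC (vshift ε p) →₀ K) →ₗ[K]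
        ((freeMod K (fun i : {i // PB i} => cB i.1)).obj (vshift ε (vshift ε p))) :=
      LinearMap.comp ((proj (K := K) cB PB).app (vshift ε (vshift ε p))).hom
        (g.app (vshift ε p)).hom
    let F1 : (Idx cC (vshift ε p) →₀ K) →ₗ[K]
        ((freeMod K (fun i : {i // PB i} => cB i.1)).obj (vshift ε (vshift ε p))) :=
      LinearMap.comp F2 (LinearMap.comp ((incl (K := K) cC PC).app (vshift ε p)).hom
        ((proj (K := K) cC PC).app (vshift ε p)).hom)
    set y : Idx cC (vshift ε p) →₀ K :=
      asFinsupp (f.app p (Finsupp.single (⟨t.1.1, t.2⟩ : Idx cB p) k)) with hy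
    show F1 y = F2 y
    refine (apply_eq_sum F1 y).trans (Eq.trans ?_ (apply_eq_sum F2 y).symm)
    refine Finsupp.sum_congr fun s hs => ?_
    show F2 ((incl cC PC).app (vshift ε p) ((proj cC PC).app (vshift ε p)
        (Finsupp.single s (y s)))) = F2 (Finsupp.single s (y s))
    rw [proj_single]
    by_cases H : PC s.1
    · rw [dif_pos H, incl_single]
      all_goals exact congrArg F2 (congrArg (fun u => Finsupp.single u (y s)) (idx_eq rfl))
    · have hz : (incl (K := K) cC PC).app (vshift ε p)
          (0 : Idx (fun i : {i // PC i} => cC i.1) (vshift ε p) →₀ K)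
          = (0 : Idx cC (vshift ε p) →₀ K) := map_zero _
      rw [dif_neg H, hz, map_zero]
      symm
      have hys : y s ≠ 0 := Finsupp.mem_support_iff.mp hs
      have hle : cC s.1 ≤ vshift ε (cB t.1.1) :=
        support_le cB cC ε f p ⟨t.1.1, t.2⟩ k s hys
      have hfst : (cC s.1).1 ≤ δ := by
        have h' := (Prod.le_def.mp hle).1
        rwa [show (vshift ε (cB t.1.1)).1 = (cB t.1.1).1 from rfl, t.1.2] at h'
      show (proj cB PB).app (vshift ε (vshift ε p))
        (g.app (vshift ε p) (Finsupp.single s (y s))) = 0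
      refine Eq.trans (apply_eq_sum ((proj (K := K) cB PB).app (vshift ε (vshift ε p))).hom
        (asFinsupp (g.app (vshift ε p) (Finsupp.single s (y s))))) ?_
      refine Eq.trans (Finsupp.sum_congr (g2 := fun _ _ => 0) fun d hd => ?_) (Finsupp.sum_fun_zero _)
      have hwd : asFinsupp (K := K) (g.app (vshift ε p) (Finsupp.single s (y s))) d ≠ 0 :=
        Finsupp.mem_support_iff.mp hd
      have hled : cB d.1 ≤ vshift ε (cC s.1) :=
        support_le cC cB ε g (vshift ε p) s (y s) d hwd
      have hfstd : (cB d.1).1 ≤ (cC s.1).1 := (Prod.le_def.mp hled).1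
      have hnd : ¬ PB d.1 := fun Hd => H (le_antisymm hfst (by rw [← Hd]; exact hfstd))
      show (proj cB PB).app (vshift ε (vshift ε p))
          (Finsupp.single d (asFinsupp (K := K) (g.app (vshift ε p)
            (Finsupp.single s (y s))) d)) = 0
      rw [proj_single, dif_neg hnd]
      rfl
  rw [step1]
  have h2 : g.app (vshift ε p) (f.app p (Finsupp.single (⟨t.1.1, t.2⟩ : Idx cB p) k))
      = (freeMod K cB).map (homOfLE h) (Finsupp.single (⟨t.1.1, t.2⟩ : Idx cB p) k) :=
    hom_congr (hfg p h) _
  rw [h2, freeMod_map_single, proj_single, dif_pos t.1.2, freeMod_map_single]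
  all_goals exact congrArg (fun u => Finsupp.single u k) (idx_eq rfl)

end Key

/-- Vertical interleaving transports along isomorphisms. -/
lemma interleaved_congr {ε : ℝ} {M M' N N' : SlabMod a b n K}
    (eM : M ≅ M') (eN : N ≅ N') (h : VertInterleaved K ε M N) :
    VertInterleaved K ε M' N' := by
  obtain ⟨f, g, h1, h2⟩ := h
  refine ⟨eM.inv ≫ f ≫ Functor.whiskerLeft (vshiftFunctor a b n ε) eN.hom,
    eN.inv ≫ g ≫ Functor.whiskerLeft (vshiftFunctor a b n ε) eM.hom, fun p hp => ?_, fun p hp => ?_⟩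
  · have nat := eM.hom.naturality (homOfLE hp)
    have hh := h1 p hp
    show eM.inv.app p ≫ f.app p ≫ eN.hom.app (vshift ε p) ≫ eN.inv.app (vshift ε p) ≫
        g.app (vshift ε p) ≫ eM.hom.app (vshift ε (vshift ε p)) = M'.map (homOfLE hp)
    erw [← Category.assoc (eN.hom.app _) (eN.inv.app _), Iso.hom_inv_id_app, Category.id_comp,
      ← Category.assoc (f.app p) (g.app (vshift ε p)), hh, nat, ← Category.assoc, Iso.inv_hom_id_app,
      Category.id_comp]
  · have nat := eN.hom.naturality (homOfLE hp)
    have hh := h2 p hp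
    show eN.inv.app p ≫ g.app p ≫ eM.hom.app (vshift ε p) ≫ eM.inv.app (vshift ε p) ≫
        f.app (vshift ε p) ≫ eN.hom.app (vshift ε (vshift ε p)) = N'.map (homOfLE hp)
    erw [← Category.assoc (eM.hom.app _) (eM.inv.app _), Iso.hom_inv_id_app, Category.id_comp,
      ← Category.assoc (g.app p) (f.app (vshift ε p)), hh, nat, ← Category.assoc, Iso.inv_hom_id_app,
      Category.id_comp]

end SummandAux

/-- Let `M, N : [a,b] × ℝⁿ → vec` be free persistence modules (with barcodes given by the
generator families `cM : ι → [a,b]×ℝⁿ` and `cN : κ → [a,b]×ℝⁿ`) that are vertically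
`ε`-interleaved.  For `δ ∈ [a,b]`, the direct summands `M^δ` and `N^δ` consisting of the
interval summands whose free interval has first coordinate exactly `δ` are also vertically
`ε`-interleaved. -/
theorem summand_interleaved (a b : ℝ) (n : ℕ) (K : Type) [Field K]
    (ι κ : Type) [Fintype ι] [Fintype κ]
    (cM : ι → Slab a b n) (cN : κ → Slab a b n)
    (M N : SlabMod a b n K)
    (hM : Nonempty (M ≅ freeMod K cM)) (hN : Nonempty (N ≅ freeMod K cN))
    (ε : ℝ) (hε : 0 ≤ ε) (hMN : VertInterleaved K ε M N) (δ : Set.Icc a b) :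
    VertInterleaved K ε
      (freeMod K (fun i : {i : ι // (cM i).1 = δ} => cM i.1))
      (freeMod K (fun j : {j : κ // (cN j).1 = δ} => cN j.1)) := by
  classical
  obtain ⟨eM⟩ := hM
  obtain ⟨eN⟩ := hN
  obtain ⟨f, g, h1, h2⟩ := SummandAux.interleaved_congr eM eN hMN
  refine ⟨(SummandAux.incl cM (fun i => (cM i).1 = δ)) ≫ f ≫
      Functor.whiskerLeft (vshiftFunctor a b n ε) (SummandAux.proj cN (fun j => (cN j).1 = δ)),
    (SummandAux.incl cN (fun j => (cN j).1 = δ)) ≫ g ≫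
      Functor.whiskerLeft (vshiftFunctor a b n ε) (SummandAux.proj cM (fun i => (cM i).1 = δ)),
    fun p hp => ?_, fun p hp => ?_⟩
  · exact SummandAux.key cM cN ε δ f g h1 p hp
  · exact SummandAux.key cN cM ε δ g f h2 p hp
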